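/- The moment generating function of a Nakagami-m random variable Z evaluated at −s (i.e., the Laplace transform E[e^{−sZ}]) equals (1/√π) Γ(m + 1/2) U(m, 1/2, s²Ω/(4m)) for s > 0, where U is Tricomi's confluent hypergeometric function. -/

import Mathlib

open Real MeasureTheory Set

lemma phi_image (c : ℝ) (hc : 0 < c) :
    (fun t : ℝ => t - c / t) '' Ioi 0 = univ := by
  apply eq_univ_of_forall
  intro w
  have h4c : 0 < w ^ 2 + 4 * c := by positivity
  have hsq : |w| < Real.sqrt (w ^ 2 + 4 * c) := by
    have : |w| = Real.sqrt (w ^ 2) := (Real.sqrt_sq_eq_abs w).symm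
    rw [this]
    exact Real.sqrt_lt_sqrt (sq_nonneg w) (by linarith)
  set r := Real.sqrt (w ^ 2 + 4 * c) with hr
  have hrsq : r ^ 2 = w ^ 2 + 4 * c := Real.sq_sqrt h4c.le
  have ht : 0 < (w + r) / 2 := by
    have := neg_abs_le w
    have := abs_nonneg w
    nlinarith [hsq]
  refine ⟨(w + r) / 2, ht, ?_⟩
  have hwr : 0 < w + r := by linarith
  have hkey : c / ((w + r) / 2) = (r - w) / 2 := by
    rw [div_eq_div_iff (by positivity) two_ne_zero]
    nlinarith [hrsq]
  show (w + r) / 2 - c / ((w + r) / 2) = w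
  rw [hkey]; ring

lemma phi_inj (c : ℝ) (hc : 0 < c) : InjOn (fun t : ℝ => t - c / t) (Ioi 0) := by
  have : StrictMonoOn (fun t : ℝ => t - c / t) (Ioi 0) := by
    intro a ha b hb hab
    simp only
    have ha' : (0:ℝ) < a := ha
    have hb' : (0:ℝ) < b := hb
    have : c / b < c / a := div_lt_div_of_pos_left hc ha' hab
    linarith
  exact this.injOn

lemma integrable_base (c : ℝ) (hc : 0 < c) :
    IntegrableOn (fun t : ℝ => Real.exp (-t ^ 2 - c ^ 2 / t ^ 2)) (Ioi 0) := by
  apply Integrable.mono' ((integrable_exp_neg_mul_sq one_pos).integrableOn (s := Ioi 0))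
  · apply Measurable.aestronglyMeasurable
    fun_prop
  · filter_upwards [ae_restrict_mem measurableSet_Ioi] with t ht
    rw [Real.norm_eq_abs, abs_of_pos (Real.exp_pos _)]
    apply Real.exp_le_exp.2
    have : (0:ℝ) < t := ht
    have : 0 ≤ c ^ 2 / t ^ 2 := by positivity
    nlinarith

lemma psi_step (c : ℝ) (hc : 0 < c) :
    ∫ t in Ioi (0:ℝ), Real.exp (-t ^ 2 - c ^ 2 / t ^ 2) =
      ∫ t in Ioi (0:ℝ), (c / t ^ 2) * Real.exp (-t ^ 2 - c ^ 2 / t ^ 2) := by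
  have himg : (fun t : ℝ => c / t) '' Ioi 0 = Ioi 0 := by
    ext w
    constructor
    · rintro ⟨t, ht, rfl⟩
      exact div_pos hc ht
    · intro hw
      exact ⟨c / w, div_pos hc hw, by field_simp⟩
  have hderiv : ∀ t ∈ Ioi (0:ℝ),
      HasDerivWithinAt (fun t : ℝ => c / t) (-(c / t ^ 2)) (Ioi 0) t := by
    intro t ht
    have h := ((hasDerivAt_inv (ne_of_gt (show (0:ℝ) < t from ht))).const_mul c)
    simpa [div_eq_mul_inv, neg_div] using h.hasDerivWithinAt
  have hinj : InjOn (fun t : ℝ => c / t) (Ioi 0) := by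
    intro a ha b hb hab
    have ha' : (0:ℝ) < a := ha
    have hb' : (0:ℝ) < b := hb
    simp only at hab
    rw [div_eq_div_iff ha'.ne' hb'.ne'] at hab
    exact (mul_left_cancel₀ hc.ne' hab).symm
  have := integral_image_eq_integral_abs_deriv_smul measurableSet_Ioi hderiv hinj
    (fun w => Real.exp (-w ^ 2 - c ^ 2 / w ^ 2))
  rw [himg] at this
  rw [this]
  refine setIntegral_congr_fun measurableSet_Ioi (fun t ht => ?_)
  have ht' : (0:ℝ) < t := ht
  have h1 : |(-(c / t ^ 2))| = c / t ^ 2 := by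
    rw [abs_neg, abs_of_pos (by positivity)]
  rw [smul_eq_mul, h1]
  congr 1
  have : -(c / t) ^ 2 - c ^ 2 / (c / t) ^ 2 = -t ^ 2 - c ^ 2 / t ^ 2 := by
    field_simp
    ring
  rw [this]


open Real MeasureTheory Set

lemma sub_integral (c : ℝ) (hc : 0 < c) :
    ∫ t in Ioi (0:ℝ), Real.exp (-t ^ 2 - c ^ 2 / t ^ 2) =
      Real.sqrt π / 2 * Real.exp (-(2 * c)) := by
  have hderiv : ∀ t ∈ Ioi (0:ℝ),
      HasDerivWithinAt (fun t : ℝ => t - c / t) (1 + c / t ^ 2) (Ioi 0) t := by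
    intro t ht
    have ht' : (0:ℝ) < t := ht
    have h := (hasDerivAt_id t).sub ((hasDerivAt_inv ht'.ne').const_mul c)
    have : (1 : ℝ) - c * (-(t ^ 2)⁻¹) = 1 + c / t ^ 2 := by field_simp; ring
    have h2 : HasDerivAt (fun t : ℝ => t - c / t) (1 - c * -(t ^ 2)⁻¹) t :=
      h.congr_of_eventuallyEq (Filter.Eventually.of_forall fun y => by simp [div_eq_mul_inv])
    rw [← this]; exact h2.hasDerivWithinAt
  have key := integral_image_eq_integral_abs_deriv_smul measurableSet_Ioi hderiv
      (phi_inj c hc) (fun w => Real.exp (-w ^ 2))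
  rw [phi_image c hc] at key
  have hgauss : ∫ x in (univ : Set ℝ), Real.exp (-x ^ 2) = Real.sqrt π := by
    rw [Measure.restrict_univ]
    simpa using integral_gaussian 1
  rw [hgauss] at key
  have hptwise : ∀ t ∈ Ioi (0:ℝ),
      |1 + c / t ^ 2| • Real.exp (-(t - c / t) ^ 2) =
        Real.exp (2 * c) * (Real.exp (-t ^ 2 - c ^ 2 / t ^ 2)
          + (c / t ^ 2) * Real.exp (-t ^ 2 - c ^ 2 / t ^ 2)) := by
    intro t ht
    have ht' : (0:ℝ) < t := ht
    have habs : |1 + c / t ^ 2| = 1 + c / t ^ 2 := abs_of_pos (by positivity)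
    have hexp : -(t - c / t) ^ 2 = 2 * c + (-t ^ 2 - c ^ 2 / t ^ 2) := by
      field_simp; ring
    rw [smul_eq_mul, habs, hexp, Real.exp_add]
    ring
  rw [setIntegral_congr_fun measurableSet_Ioi hptwise] at key
  have hint1 := integrable_base c hc
  have hint2 : IntegrableOn (fun t : ℝ => (c / t ^ 2) * Real.exp (-t ^ 2 - c ^ 2 / t ^ 2))
      (Ioi 0) := by
    have himg : (fun t : ℝ => c / t) '' Ioi 0 = Ioi 0 := by
      ext w
      constructor
      · rintro ⟨t, ht, rfl⟩
        exact div_pos hc ht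
      · intro hw
        exact ⟨c / w, div_pos hc hw, by field_simp⟩
    have hderiv2 : ∀ t ∈ Ioi (0:ℝ),
        HasDerivWithinAt (fun t : ℝ => c / t) (-(c / t ^ 2)) (Ioi 0) t := by
      intro t ht
      have h := ((hasDerivAt_inv (ne_of_gt (show (0:ℝ) < t from ht))).const_mul c)
      simpa [div_eq_mul_inv, neg_div] using h.hasDerivWithinAt
    have hinj : InjOn (fun t : ℝ => c / t) (Ioi 0) := by
      intro a ha b hb hab
      have ha' : (0:ℝ) < a := ha
      have hb' : (0:ℝ) < b := hb
      simp only at hab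
      rw [div_eq_div_iff ha'.ne' hb'.ne'] at hab
      exact (mul_left_cancel₀ hc.ne' hab).symm
    have := (integrableOn_image_iff_integrableOn_abs_deriv_smul measurableSet_Ioi hderiv2 hinj
      (fun w => Real.exp (-w ^ 2 - c ^ 2 / w ^ 2))).mp (by rw [himg]; exact hint1)
    apply this.congr_fun ?_ measurableSet_Ioi
    intro t ht
    have ht' : (0:ℝ) < t := ht
    have h1 : |(-(c / t ^ 2))| = c / t ^ 2 := by
      rw [abs_neg, abs_of_pos (by positivity)]
    simp only [smul_eq_mul, h1]
    congr 1
    have : -(c / t) ^ 2 - c ^ 2 / (c / t) ^ 2 = -t ^ 2 - c ^ 2 / t ^ 2 := by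
      field_simp; ring
    rw [this]
  rw [integral_const_mul, integral_add hint1 hint2, ← psi_step c hc] at key
  have hexp2 : Real.exp (2 * c) ≠ 0 := Real.exp_ne_zero _
  have : Real.exp (-(2 * c)) = (Real.exp (2 * c))⁻¹ := by
    rw [Real.exp_neg]
  rw [this]
  field_simp at key ⊢
  linarith



lemma rhs_eq (m x : ℝ) (hm : 0 < m) (hx : 0 < x) :
    Real.Gamma (m + 1/2) * ∫ t in Ioi (0:ℝ),
        Real.exp (-x * t) * t ^ (m - 1) * (1 + t) ^ (-(m + 1/2)) =
      Real.Gamma m * ∫ u in Ioi (0:ℝ),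
        Real.exp (-u) * u ^ (m - 1/2) * (u + x) ^ (-m) := by
  set μ := volume.restrict (Ioi (0:ℝ)) with hμ
  set G : ℝ → ℝ → ℝ := fun t v =>
    Real.exp (-x * t) * t ^ (m - 1) * (v ^ (m - 1/2) * Real.exp (-((1 + t) * v))) with hG
  have hmeas : Measurable (Function.uncurry G) := by
    unfold Function.uncurry
    simp only [hG]
    fun_prop
  -- pointwise rearrangement
  have hrearr : ∀ t v : ℝ, G t v =
      (v ^ (m - 1/2) * Real.exp (-v)) * (t ^ (m - 1) * Real.exp (-((x + v) * t))) := by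
    intro t v
    have he : Real.exp (-x * t) * Real.exp (-((1 + t) * v)) =
        Real.exp (-v) * Real.exp (-((x + v) * t)) := by
      rw [← Real.exp_add, ← Real.exp_add]; ring_nf
    simp only [hG]
    linear_combination (t ^ (m - 1) * v ^ (m - 1/2)) * he
  -- sections in t, fixed v > 0
  have hsect : ∀ v : ℝ, v ∈ Ioi (0:ℝ) → Integrable (fun t => G t v) μ := by
    intro v hv
    have hv' : (0:ℝ) < v := hv
    have hbase : IntegrableOn (fun t : ℝ => t ^ (m - 1) * Real.exp (-(x + v) * t)) (Ioi 0) := by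
      have := integrableOn_rpow_mul_exp_neg_mul_rpow (p := 1) (s := m - 1) (b := x + v)
        (by linarith) one_pos (by positivity)
      simpa using this
    refine IntegrableOn.congr_fun (hbase.const_mul (v ^ (m - 1/2) * Real.exp (-v)))
      (fun t ht => ?_) measurableSet_Ioi
    rw [hrearr t v]
    ring_nf
  -- value of section integral in t for v > 0
  have hval : ∀ v : ℝ, v ∈ Ioi (0:ℝ) →
      (∫ t, G t v ∂μ) = Real.Gamma m * (Real.exp (-v) * v ^ (m - 1/2) * (v + x) ^ (-m)) := by
    intro v hv
    have hv' : (0:ℝ) < v := hv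
    have step : (∫ t, G t v ∂μ) =
        ∫ t in Ioi (0:ℝ), (v ^ (m - 1/2) * Real.exp (-v)) * (t ^ (m - 1) *
          Real.exp (-((x + v) * t))) := by
      exact setIntegral_congr_fun measurableSet_Ioi (fun t ht => hrearr t v)
    rw [step, integral_const_mul, integral_rpow_mul_exp_neg_mul_Ioi hm (by positivity)]
    have hx_v : (0:ℝ) < x + v := by linarith
    have hpow : (1/(x + v)) ^ m = (v + x) ^ (-m) := by
      rw [Real.rpow_neg (by positivity), ← Real.inv_rpow (by positivity), one_div, add_comm]
    rw [hpow]
    ring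
  -- nonnegativity of G on the positive quadrant
  have hGnn : ∀ t ∈ Ioi (0:ℝ), ∀ v ∈ Ioi (0:ℝ), 0 ≤ G t v := by
    intro t ht v hv
    have ht' : (0:ℝ) < t := ht
    have hv' : (0:ℝ) < v := hv
    simp only [hG]
    positivity
  -- integrability of the closed-form outer function
  have houter : Integrable (fun v => Real.Gamma m *
      (Real.exp (-v) * v ^ (m - 1/2) * (v + x) ^ (-m))) μ := by
    have hbase : IntegrableOn (fun v : ℝ => v ^ (m - 1/2) * Real.exp (-1 * v)) (Ioi 0) := by
      have := integrableOn_rpow_mul_exp_neg_mul_rpow (p := 1) (s := m - 1/2) (b := 1)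
        (by linarith) one_pos one_pos
      simpa using this
    apply Integrable.mono' ((hbase.const_mul (Real.Gamma m * x ^ (-m))))
    · apply Measurable.aestronglyMeasurable
      fun_prop
    · filter_upwards [ae_restrict_mem measurableSet_Ioi] with v hv
      have hv' : (0:ℝ) < v := hv
      have h1 : (v + x) ^ (-m) ≤ x ^ (-m) :=
        Real.rpow_le_rpow_of_nonpos hx (by linarith) (by linarith)
      have h2 : (0:ℝ) ≤ (v + x) ^ (-m) := by positivity
      have h3 : (0:ℝ) < Real.Gamma m := Real.Gamma_pos_of_pos hm
      rw [Real.norm_eq_abs, abs_of_nonneg (by positivity)]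
      have h4 : (0:ℝ) ≤ Real.exp (-v) * v ^ (m - 1/2) := by positivity
      calc Real.Gamma m * (Real.exp (-v) * v ^ (m - 1/2) * (v + x) ^ (-m))
          ≤ Real.Gamma m * (Real.exp (-v) * v ^ (m - 1/2) * x ^ (-m)) := by
            apply mul_le_mul_of_nonneg_left _ h3.le
            exact mul_le_mul_of_nonneg_left h1 h4
        _ = Real.Gamma m * x ^ (-m) * (v ^ (m - 1/2) * Real.exp (-1 * v)) := by
            rw [neg_one_mul]; ring
  -- integrability on the product
  have hprod : Integrable (Function.uncurry G) (μ.prod μ) := by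
    rw [integrable_prod_iff' (hmeas.aestronglyMeasurable)]
    constructor
    · rw [hμ]
      filter_upwards [ae_restrict_mem measurableSet_Ioi] with v hv
      exact hsect v hv
    · apply houter.congr
      rw [hμ]
      filter_upwards [ae_restrict_mem measurableSet_Ioi] with v hv
      have : (∫ t, ‖G t v‖ ∂μ) = ∫ t, G t v ∂μ := by
        refine integral_congr_ae ?_
        rw [hμ]
        filter_upwards [ae_restrict_mem measurableSet_Ioi] with t ht
        exact Real.norm_of_nonneg (hGnn t ht v hv)
      rw [show (fun t => G t v) = fun t => Function.uncurry G (t, v) from rfl] at this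
      rw [← hval v hv]
      exact this.symm
  -- Fubini
  have hswap := integral_integral_swap (f := G) (μ := μ) (ν := μ) hprod
  -- left side: ∫t ∫v G = Γ(m+1/2) * T
  have hleft : (∫ t, ∫ v, G t v ∂μ ∂μ) = Real.Gamma (m + 1/2) *
      ∫ t in Ioi (0:ℝ), Real.exp (-x * t) * t ^ (m - 1) * (1 + t) ^ (-(m + 1/2)) := by
    rw [← integral_const_mul, hμ]
    refine setIntegral_congr_fun measurableSet_Ioi (fun t ht => ?_)
    have ht' : (0:ℝ) < t := ht
    have h1t : (0:ℝ) < 1 + t := by linarith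
    have hv : (∫ v in Ioi (0:ℝ), G t v) =
        (Real.exp (-x * t) * t ^ (m - 1)) *
          ∫ v in Ioi (0:ℝ), v ^ ((m + 1/2) - 1) * Real.exp (-((1 + t) * v)) := by
      rw [← integral_const_mul]
      refine setIntegral_congr_fun measurableSet_Ioi (fun v hv => ?_)
      simp only [hG]
      rw [show m + 1/2 - 1 = m - 1/2 by ring]
    rw [hv, integral_rpow_mul_exp_neg_mul_Ioi (by linarith) h1t]
    have hpow : (1/(1 + t)) ^ (m + 1/2) = (1 + t) ^ (-(m + 1/2)) := by
      rw [Real.rpow_neg h1t.le, ← Real.inv_rpow h1t.le, one_div]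
    rw [hpow]
    ring
  -- right side: ∫v ∫t G = Γ m * J
  have hright : (∫ v, ∫ t, G t v ∂μ ∂μ) = Real.Gamma m *
      ∫ u in Ioi (0:ℝ), Real.exp (-u) * u ^ (m - 1/2) * (u + x) ^ (-m) := by
    rw [← integral_const_mul, hμ]
    refine setIntegral_congr_fun measurableSet_Ioi (fun v hv => ?_)
    rw [hval v hv]
  rw [← hleft, ← hright, hswap]



lemma subordination (p : ℝ) (hp : 0 < p) :
    ∫ u in Ioi (0:ℝ), u ^ (-(1:ℝ)/2) * Real.exp (-u - p ^ 2 / (4 * u)) =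
      Real.sqrt π * Real.exp (-p) := by
  have h2 : (2:ℝ) ≠ 0 := two_ne_zero
  have key := integral_comp_rpow_Ioi
    (fun u : ℝ => u ^ (-(1:ℝ)/2) * Real.exp (-u - p ^ 2 / (4 * u))) h2
  rw [← key]
  have hcong : ∀ t ∈ Ioi (0:ℝ),
      (|(2:ℝ)| * t ^ ((2:ℝ) - 1)) • ((fun u : ℝ => u ^ (-(1:ℝ)/2) *
        Real.exp (-u - p ^ 2 / (4 * u))) (t ^ (2:ℝ))) =
      2 * Real.exp (-t ^ 2 - (p/2) ^ 2 / t ^ 2) := by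
    intro t ht
    have ht' : (0:ℝ) < t := ht
    have h1 : t ^ ((2:ℝ) - 1) = t := by
      norm_num
    have h2' : (t ^ (2:ℝ)) ^ (-(1:ℝ)/2) = t⁻¹ := by
      rw [← Real.rpow_mul ht'.le]
      norm_num
      exact Real.rpow_neg_one t
    have h3 : t ^ (2:ℝ) = t ^ 2 := by
      rw [← Real.rpow_natCast t 2]; norm_num
    have h2'' : (t ^ 2 : ℝ) ^ (-(1:ℝ)/2) = t⁻¹ := by rw [← h3]; exact h2'
    simp only [h1, h3, h2'', smul_eq_mul, abs_two]
    have h4 : -(t^2) - p ^ 2 / (4 * t ^ 2) = -t ^ 2 - (p/2) ^ 2 / t ^ 2 := by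
      field_simp; ring
    rw [h4]
    field_simp
  rw [setIntegral_congr_fun measurableSet_Ioi hcong, integral_const_mul,
    sub_integral (p/2) (by positivity)]
  rw [show -(2 * (p/2)) = -p by ring]
  ring

lemma lhs_eq (m b s : ℝ) (hm : 0 < m) (hb : 0 < b) (hs : 0 < s) :
    ∫ z in Ioi (0:ℝ), Real.exp (-(s*z)) * (z ^ (2*m - 1) * Real.exp (-(b*z^2))) =
      Real.Gamma m / (2 * b ^ m * Real.sqrt π) *
        ∫ u in Ioi (0:ℝ), Real.exp (-u) * u ^ (m - 1/2) * (u + s^2/(4*b)) ^ (-m) := by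
  set x := s^2/(4*b) with hxdef
  have hx : 0 < x := by positivity
  set μ := volume.restrict (Ioi (0:ℝ)) with hμ
  set F : ℝ → ℝ → ℝ := fun z u =>
    (z ^ (2*m - 1) * Real.exp (-(b*z^2))) *
      (u ^ (-(1:ℝ)/2) * Real.exp (-u - (s*z)^2/(4*u))) with hF
  have hmeas : Measurable (Function.uncurry F) := by
    unfold Function.uncurry
    simp only [hF]
    fun_prop
  -- rearrangement for z > 0
  have hrearr : ∀ z ∈ Ioi (0:ℝ), ∀ u : ℝ, u ≠ 0 → F z u =
      (u ^ (-(1:ℝ)/2) * Real.exp (-u)) *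
        (z ^ (2*m - 1) * Real.exp (-((b + s^2/(4*u)) * z ^ (2:ℝ)))) := by
    intro z hz u hu
    have hz' : (0:ℝ) < z := hz
    have h2 : z ^ (2:ℝ) = z ^ 2 := by
      rw [← Real.rpow_natCast z 2]; norm_num
    have he : Real.exp (-(b*z^2)) * Real.exp (-u - (s*z)^2/(4*u)) =
        Real.exp (-u) * Real.exp (-((b + s^2/(4*u)) * z ^ 2)) := by
      rw [← Real.exp_add, ← Real.exp_add]
      congr 1
      field_simp
      ring
    simp only [hF, h2]
    linear_combination (z ^ (2*m-1) * u ^ (-(1:ℝ)/2)) * he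
  -- sections in z, fixed u > 0
  have hsect : ∀ u : ℝ, u ∈ Ioi (0:ℝ) → Integrable (fun z => F z u) μ := by
    intro u hu
    have hu' : (0:ℝ) < u := hu
    have hbase : IntegrableOn (fun z : ℝ =>
        z ^ (2*m - 1) * Real.exp (-(b + s^2/(4*u)) * z ^ (2:ℝ))) (Ioi 0) :=
      integrableOn_rpow_mul_exp_neg_mul_rpow (p := 2) (s := 2*m - 1) (b := b + s^2/(4*u))
        (by linarith) two_pos (by positivity)
    refine IntegrableOn.congr_fun (hbase.const_mul (u ^ (-(1:ℝ)/2) * Real.exp (-u)))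
      (fun z hz => ?_) measurableSet_Ioi
    rw [hrearr z hz u hu'.ne']
    ring_nf
  -- value of section integral over z, fixed u > 0
  have hval : ∀ u : ℝ, u ∈ Ioi (0:ℝ) →
      (∫ z, F z u ∂μ) = Real.Gamma m / (2 * b ^ m) *
        (Real.exp (-u) * u ^ (m - 1/2) * (u + x) ^ (-m)) := by
    intro u hu
    have hu' : (0:ℝ) < u := hu
    have hB : (0:ℝ) < b + s^2/(4*u) := by positivity
    have step : (∫ z, F z u ∂μ) = (u ^ (-(1:ℝ)/2) * Real.exp (-u)) *
        ∫ z in Ioi (0:ℝ), z ^ (2*m - 1) * Real.exp (-(b + s^2/(4*u)) * z ^ (2:ℝ)) := by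
      rw [← integral_const_mul]
      exact setIntegral_congr_fun measurableSet_Ioi
        (fun z hz => by rw [hrearr z hz u hu'.ne']; ring_nf)
    rw [step, integral_rpow_mul_exp_neg_mul_rpow (by norm_num : (0:ℝ) < 2) (by linarith) hB]
    rw [show -(2*m - 1 + 1)/2 = -m by ring, show (2*m - 1 + 1)/2 = m by ring]
    -- algebra
    have hBx : b + s^2/(4*u) = b * (u + x) / u := by
      rw [hxdef]; field_simp
    have hux : (0:ℝ) < u + x := by linarith
    have hpow : (b * (u + x) / u) ^ (-m) = u ^ m / (b ^ m * (u + x) ^ m) := by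
      rw [Real.rpow_neg (by positivity), Real.div_rpow (by positivity) (by positivity),
        Real.mul_rpow hb.le hux.le, inv_div]
    have hupow : u ^ (-(1:ℝ)/2) * u ^ m = u ^ (m - 1/2) := by
      rw [← Real.rpow_add hu', show -(1:ℝ)/2 + m = m - 1/2 by ring]
    rw [hBx, hpow]
    have h1 : (0:ℝ) < b ^ m := by positivity
    have h2 : (0:ℝ) < (u + x) ^ m := by positivity
    have h3 : (u + x) ^ (-m) = ((u + x) ^ m)⁻¹ := Real.rpow_neg hux.le m
    rw [h3]
    rw [div_mul_eq_mul_div, ← hupow]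
    field_simp
  -- nonnegativity on positive quadrant
  have hFnn : ∀ z ∈ Ioi (0:ℝ), ∀ u ∈ Ioi (0:ℝ), 0 ≤ F z u := by
    intro z hz u hu
    have hz' : (0:ℝ) < z := hz
    have hu' : (0:ℝ) < u := hu
    simp only [hF]
    positivity
  -- integrability of closed-form outer function
  have houter : Integrable (fun u => Real.Gamma m / (2 * b ^ m) *
      (Real.exp (-u) * u ^ (m - 1/2) * (u + x) ^ (-m))) μ := by
    have hbase : IntegrableOn (fun u : ℝ => u ^ (m - 1/2) * Real.exp (-1 * u)) (Ioi 0) := by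
      have := integrableOn_rpow_mul_exp_neg_mul_rpow (p := 1) (s := m - 1/2) (b := 1)
        (by linarith) one_pos one_pos
      simpa using this
    apply Integrable.mono' ((hbase.const_mul (Real.Gamma m / (2 * b ^ m) * x ^ (-m))))
    · apply Measurable.aestronglyMeasurable
      fun_prop
    · filter_upwards [ae_restrict_mem measurableSet_Ioi] with u hu
      have hu' : (0:ℝ) < u := hu
      have h1 : (u + x) ^ (-m) ≤ x ^ (-m) :=
        Real.rpow_le_rpow_of_nonpos hx (by linarith) (by linarith)
      have h3 : (0:ℝ) < Real.Gamma m := Real.Gamma_pos_of_pos hm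
      have hc : (0:ℝ) < Real.Gamma m / (2 * b ^ m) := by positivity
      rw [Real.norm_eq_abs, abs_of_nonneg (by positivity)]
      have h4 : (0:ℝ) ≤ Real.exp (-u) * u ^ (m - 1/2) := by positivity
      calc Real.Gamma m / (2 * b ^ m) * (Real.exp (-u) * u ^ (m - 1/2) * (u + x) ^ (-m))
          ≤ Real.Gamma m / (2 * b ^ m) * (Real.exp (-u) * u ^ (m - 1/2) * x ^ (-m)) := by
            apply mul_le_mul_of_nonneg_left _ hc.le
            exact mul_le_mul_of_nonneg_left h1 h4
        _ = Real.Gamma m / (2 * b ^ m) * x ^ (-m) * (u ^ (m - 1/2) * Real.exp (-1 * u)) := by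
            rw [neg_one_mul]; ring
  -- product integrability
  have hprod : Integrable (Function.uncurry F) (μ.prod μ) := by
    rw [integrable_prod_iff' (hmeas.aestronglyMeasurable)]
    constructor
    · rw [hμ]
      filter_upwards [ae_restrict_mem measurableSet_Ioi] with u hu
      exact hsect u hu
    · apply houter.congr
      rw [hμ]
      filter_upwards [ae_restrict_mem measurableSet_Ioi] with u hu
      have : (∫ z, ‖F z u‖ ∂μ) = ∫ z, F z u ∂μ := by
        refine integral_congr_ae ?_
        rw [hμ]
        filter_upwards [ae_restrict_mem measurableSet_Ioi] with z hz
        exact Real.norm_of_nonneg (hFnn z hz u hu)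
      rw [← hval u hu]
      exact this.symm
  have hswap := integral_integral_swap (f := F) (μ := μ) (ν := μ) hprod
  have hleft : (∫ z, ∫ u, F z u ∂μ ∂μ) = Real.sqrt π *
      ∫ z in Ioi (0:ℝ), Real.exp (-(s*z)) * (z ^ (2*m - 1) * Real.exp (-(b*z^2))) := by
    rw [← integral_const_mul, hμ]
    refine setIntegral_congr_fun measurableSet_Ioi (fun z hz => ?_)
    have hz' : (0:ℝ) < z := hz
    have hin : (∫ u in Ioi (0:ℝ), F z u) = (z ^ (2*m - 1) * Real.exp (-(b*z^2))) *
        ∫ u in Ioi (0:ℝ), u ^ (-(1:ℝ)/2) * Real.exp (-u - (s*z)^2/(4*u)) := by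
      rw [← integral_const_mul]
    rw [hin, subordination (s*z) (by positivity)]
    ring
  have hright : (∫ u, ∫ z, F z u ∂μ ∂μ) = Real.Gamma m / (2 * b ^ m) *
      ∫ u in Ioi (0:ℝ), Real.exp (-u) * u ^ (m - 1/2) * (u + x) ^ (-m) := by
    rw [← integral_const_mul, hμ]
    exact setIntegral_congr_fun measurableSet_Ioi (fun u hu => hval u hu)
  have hπ : (0:ℝ) < Real.sqrt π := Real.sqrt_pos.mpr pi_pos
  have key : Real.sqrt π *
      (∫ z in Ioi (0:ℝ), Real.exp (-(s*z)) * (z ^ (2*m - 1) * Real.exp (-(b*z^2)))) =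
      Real.Gamma m / (2 * b ^ m) *
        ∫ u in Ioi (0:ℝ), Real.exp (-u) * u ^ (m - 1/2) * (u + x) ^ (-m) := by
    rw [← hleft, ← hright, hswap]
  have hbm : (0:ℝ) < b ^ m := by positivity
  rw [show Real.Gamma m / (2 * b ^ m * Real.sqrt π) = (Real.Gamma m / (2 * b ^ m)) / Real.sqrt π by ring,
    div_mul_eq_mul_div, ← key]
  exact (mul_div_cancel_left₀ _ hπ.ne').symm


/-- Tricomi's confluent hypergeometric function (integral representation):
U(a, b, z) = (1/Γ(a)) ∫_0^∞ e^{-zt} t^{a-1} (1+t)^{b-a-1} dt. -/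
noncomputable def tricomiU (a b z : ℝ) : ℝ :=
  (1 / Real.Gamma a) * ∫ t in Ioi (0 : ℝ), Real.exp (-z * t) * t ^ (a - 1) * (1 + t) ^ (b - a - 1)

/-- The Laplace transform of a Nakagami-m random variable:
∫_0^∞ e^{-sz} f(z) dz = Γ(m + 1/2) U(m, 1/2, s²Ω/(4m)) / √π. -/
theorem nakagami_laplace_transform (m Ω s : ℝ) (hm : 0 < m) (hΩ : 0 < Ω) (hs : 0 < s) :
    ∫ z in Ioi (0 : ℝ),
      Real.exp (-s * z) *
        (2 * m ^ m * z ^ (2 * m - 1) / (Ω ^ m * Real.Gamma m) * Real.exp (-m * z ^ 2 / Ω)) =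
    Real.Gamma (m + 1 / 2) * tricomiU m (1 / 2) (s ^ 2 * Ω / (4 * m)) / Real.sqrt π := by
  have hb : (0:ℝ) < m / Ω := by positivity
  have hΓ : (0:ℝ) < Real.Gamma m := Real.Gamma_pos_of_pos hm
  have hx : (0:ℝ) < s ^ 2 * Ω / (4 * m) := by positivity
  have hπ : (0:ℝ) < Real.sqrt π := Real.sqrt_pos.mpr pi_pos
  have hmm : (0:ℝ) < m ^ m := Real.rpow_pos_of_pos hm m
  have hΩm : (0:ℝ) < Ω ^ m := Real.rpow_pos_of_pos hΩ m
  set x := s ^ 2 * Ω / (4 * m) with hxdef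
  -- left side
  have hstep1 : (∫ z in Ioi (0 : ℝ),
      Real.exp (-s * z) *
        (2 * m ^ m * z ^ (2 * m - 1) / (Ω ^ m * Real.Gamma m) * Real.exp (-m * z ^ 2 / Ω))) =
      2 * m ^ m / (Ω ^ m * Real.Gamma m) *
        ∫ z in Ioi (0:ℝ), Real.exp (-(s*z)) * (z ^ (2*m - 1) * Real.exp (-((m/Ω)*z^2))) := by
    rw [← integral_const_mul]
    refine setIntegral_congr_fun measurableSet_Ioi (fun z hz => ?_)
    rw [show -(s*z) = -s*z from by ring, show -(m/Ω * z^2) = -m*z^2/Ω from by ring]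
    ring
  have hxe : s^2/(4*(m/Ω)) = x := by
    rw [hxdef]; field_simp
  have hL := lhs_eq m (m/Ω) s hm hb hs
  rw [hxe] at hL
  rw [hstep1, hL]
  -- right side
  have hT : tricomiU m (1/2) x = (1 / Real.Gamma m) *
      ∫ t in Ioi (0:ℝ), Real.exp (-x * t) * t ^ (m - 1) * (1 + t) ^ (-(m + 1/2)) := by
    rw [tricomiU, show (1:ℝ)/2 - m - 1 = -(m + 1/2) by ring]
  have hR := rhs_eq m x hm hx
  rw [hT]
  have hdr : ((m/Ω):ℝ) ^ m = m ^ m / Ω ^ m := Real.div_rpow hm.le hΩ.le m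
  rw [hdr]
  set J := ∫ u in Ioi (0:ℝ), Real.exp (-u) * u ^ (m - 1/2) * (u + x) ^ (-m) with hJ
  set T := ∫ t in Ioi (0:ℝ), Real.exp (-x * t) * t ^ (m - 1) * (1 + t) ^ (-(m + 1/2)) with hTT
  set G2 := Real.Gamma (m + 1/2) with hG2
  set G1 := Real.Gamma m with hG1
  field_simp
  linear_combination (-1) * hR
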